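/- Jacobi's triple product identity: for |q| < 1 and z ≠ 0, (−zq; q)_∞ · (−1/z; q)_∞ = (1/(q;q)_∞) · Σ_{n=−∞}^{∞} z^n q^{n(n+1)/2}. -/

import Mathlib

open Filter

/-- A partition represented as a weakly decreasing, eventually zero sequence of parts
(0-indexed: `f i` is the (i+1)-st part). -/
def IsPartition (f : ℕ → ℕ) : Prop :=
  Antitone f ∧ ∀ᶠ i in atTop, f i = 0

/-- The size `|λ|` of a partition. -/
noncomputable def psize (f : ℕ → ℕ) : ℕ := ∑' i, f i

/-- The conjugate partition: `conj f j` is the number of parts of `f` exceeding `j`,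
i.e. the (j+1)-st column length. -/
noncomputable def conj (f : ℕ → ℕ) : ℕ → ℕ := fun j => Nat.card {i : ℕ // j < f i}

/-- The Durfee square size: the number of indices `i` with `λ_{i+1} ≥ i+1`. -/
noncomputable def durfee (f : ℕ → ℕ) : ℕ := Nat.card {i : ℕ // i < f i}

/-- Top Frobenius entry `a_{i+1} = λ_{i+1} - (i+1)` (0-indexed). -/
noncomputable def frobA (f : ℕ → ℕ) (i : ℕ) : ℕ := f i - (i + 1)

/-- Bottom Frobenius entry `b_{i+1} = λ'_{i+1} - (i+1)` (0-indexed). -/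
noncomputable def frobB (f : ℕ → ℕ) (i : ℕ) : ℕ := conj f i - (i + 1)

/-- Hook length of the (0-indexed) box `(i,j)` (valid when `j < f i`):
`h = (λ_i - j) + (λ'_j - i) - 1` in 1-indexed terms, which equals
`(λ_i - i) + (λ'_j - j) + 1`. -/
noncomputable def hook (f : ℕ → ℕ) (i j : ℕ) : ℕ :=
  (f i - (j + 1)) + (conj f j - (i + 1)) + 1

/-- A `t`-core partition: no hook length divisible by `t`. -/
def IsTCore (t : ℕ) (f : ℕ → ℕ) : Prop :=
  IsPartition f ∧ ∀ i j, j < f i → ¬ t ∣ hook f i j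

section
open Filter Finset Topology

namespace JTPaux

/-- Finite q-Pochhammer product `∏_{k<M} (1 - q^(k+1))`. -/
noncomputable def Pq (q : ℂ) (M : ℕ) : ℂ := ∏ k ∈ Finset.range M, (1 - q ^ (k + 1))

/-- Gaussian binomial coefficient as a complex number. -/
noncomputable def Gq (q : ℂ) (a b : ℕ) : ℂ :=
  if b ≤ a then Pq q a / (Pq q b * Pq q (a - b)) else 0

lemma one_sub_pow_ne {q : ℂ} (hq : ‖q‖ < 1) (j : ℕ) : (1 : ℂ) - q ^ (j + 1) ≠ 0 := by
  intro h
  have h1 : q ^ (j + 1) = 1 := by linear_combination -h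
  have : ‖q ^ (j + 1)‖ < 1 := by
    rw [norm_pow]
    exact pow_lt_one₀ (norm_nonneg q) hq (Nat.succ_ne_zero j)
  rw [h1, norm_one] at this
  exact lt_irrefl 1 this

lemma Pq_ne {q : ℂ} (hq : ‖q‖ < 1) (M : ℕ) : Pq q M ≠ 0 :=
  Finset.prod_ne_zero_iff.2 fun k _ => one_sub_pow_ne hq k

lemma Pq_succ (q : ℂ) (M : ℕ) : Pq q (M + 1) = Pq q M * (1 - q ^ (M + 1)) :=
  Finset.prod_range_succ _ _

lemma Pq_zero (q : ℂ) : Pq q 0 = 1 := by simp [Pq]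

lemma Gq_self {q : ℂ} (hq : ‖q‖ < 1) (a : ℕ) : Gq q a a = 1 := by
  rw [Gq, if_pos le_rfl, Nat.sub_self, Pq_zero, mul_one, div_self (Pq_ne hq a)]

/-- q-Pascal identity. -/
lemma pascal {q : ℂ} (hq : ‖q‖ < 1) {a b : ℕ} (hba : b ≤ a) :
    Gq q (a + 1) (b + 1) = Gq q a (b + 1) + q ^ (a - b) * Gq q a b := by
  obtain ⟨d, rfl⟩ := Nat.exists_eq_add_of_le hba
  cases d with
  | zero =>
    simp only [Nat.add_zero]
    rw [Gq_self hq, Gq_self hq, Gq, if_neg (by omega), Nat.sub_self, pow_zero]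
    ring
  | succ d =>
    have h1 : Gq q (b + (d + 1) + 1) (b + 1) =
        Pq q (b + d + 2) / (Pq q (b + 1) * Pq q (d + 1)) := by
      rw [Gq, if_pos (by omega), show b + (d + 1) + 1 = b + d + 2 from by omega,
        show b + d + 2 - (b + 1) = d + 1 from by omega]
    have h2 : Gq q (b + (d + 1)) (b + 1) = Pq q (b + d + 1) / (Pq q (b + 1) * Pq q d) := by
      rw [Gq, if_pos (by omega), show b + (d + 1) = b + d + 1 from by omega,
        show b + d + 1 - (b + 1) = d from by omega]
    have h3 : Gq q (b + (d + 1)) b = Pq q (b + d + 1) / (Pq q b * Pq q (d + 1)) := by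
      rw [Gq, if_pos (by omega), show b + (d + 1) = b + d + 1 from by omega,
        show b + d + 1 - b = d + 1 from by omega]
    rw [h1, h2, h3, show b + (d + 1) - b = d + 1 by omega]
    have e1 : Pq q (b + d + 2) = Pq q (b + d + 1) * (1 - q ^ (b + d + 2)) := Pq_succ q (b + d + 1)
    have e2 : Pq q (b + 1) = Pq q b * (1 - q ^ (b + 1)) := Pq_succ q b
    have e3 : Pq q (d + 1) = Pq q d * (1 - q ^ (d + 1)) := Pq_succ q d
    have n1 : Pq q b ≠ 0 := Pq_ne hq b
    have n2 : Pq q d ≠ 0 := Pq_ne hq d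
    have n3 : (1 : ℂ) - q ^ (b + 1) ≠ 0 := one_sub_pow_ne hq b
    have n4 : (1 : ℂ) - q ^ (d + 1) ≠ 0 := one_sub_pow_ne hq d
    rw [e1, e2, e3]
    field_simp
    ring

lemma Gq_zero {q : ℂ} (hq : ‖q‖ < 1) (a : ℕ) : Gq q a 0 = 1 := by
  rw [Gq, if_pos (Nat.zero_le a), Pq_zero, Nat.sub_zero, one_mul, div_self (Pq_ne hq a)]

lemma Gq_of_gt {q : ℂ} {a b : ℕ} (h : a < b) : Gq q a b = 0 := by
  rw [Gq, if_neg (by omega)]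

/-- Finite q-binomial theorem. -/
lemma gauss {q : ℂ} (hq : ‖q‖ < 1) (w : ℂ) (M : ℕ) :
    ∏ k ∈ range M, (1 + w * q ^ k)
      = ∑ m ∈ range (M + 1), Gq q M m * q ^ (∑ j ∈ range m, j) * w ^ m := by
  induction M with
  | zero => simp [Gq_self hq 0]
  | succ M ih =>
    have hterm : ∀ i ∈ range (M + 1),
        Gq q (M + 1) (i + 1) * q ^ (∑ j ∈ range (i + 1), j) * w ^ (i + 1)
          = Gq q M (i + 1) * q ^ (∑ j ∈ range (i + 1), j) * w ^ (i + 1)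
            + (Gq q M i * q ^ (∑ j ∈ range i, j) * w ^ i) * (w * q ^ M) := by
      intro i hi
      have hiM : i ≤ M := Nat.lt_succ_iff.mp (Finset.mem_range.mp hi)
      obtain ⟨e, rfl⟩ := Nat.exists_eq_add_of_le hiM
      rw [pascal hq (by omega : i ≤ i + e), show i + e - i = e from by omega,
        Finset.sum_range_succ]
      ring
    have hsplit : ∑ m ∈ range (M + 1 + 1), Gq q (M + 1) m * q ^ (∑ j ∈ range m, j) * w ^ m
        = (∑ m ∈ range (M + 1), Gq q M m * q ^ (∑ j ∈ range m, j) * w ^ m)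
          + (∑ m ∈ range (M + 1), Gq q M m * q ^ (∑ j ∈ range m, j) * w ^ m)
            * (w * q ^ M) := by
      rw [Finset.sum_range_succ']
      rw [Finset.sum_congr rfl hterm, Finset.sum_add_distrib, ← Finset.sum_mul]
      have h0 : Gq q (M + 1) 0 * q ^ (∑ j ∈ range 0, j) * w ^ 0
          = Gq q M 0 * q ^ (∑ j ∈ range 0, j) * w ^ 0 := by
        simp [Gq_zero hq]
      rw [h0]
      have hshift : (∑ i ∈ range (M + 1),
            Gq q M (i + 1) * q ^ (∑ j ∈ range (i + 1), j) * w ^ (i + 1))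
            + Gq q M 0 * q ^ (∑ j ∈ range 0, j) * w ^ 0
          = ∑ m ∈ range (M + 1), Gq q M m * q ^ (∑ j ∈ range m, j) * w ^ m := by
        rw [← Finset.sum_range_succ' (fun m => Gq q M m * q ^ (∑ j ∈ range m, j) * w ^ m) (M + 1),
          Finset.sum_range_succ]
        simp [Gq_of_gt (Nat.lt_succ_self M)]
      linear_combination hshift
    rw [Finset.prod_range_succ, ih, hsplit]
    ring

lemma zpow_prod (q : ℂ) (hq0 : q ≠ 0) (f : ℕ → ℤ) (N : ℕ) :
    ∏ k ∈ range N, q ^ f k = q ^ (∑ k ∈ range N, f k) := by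
  induction N with
  | zero => simp
  | succ N ih => rw [Finset.prod_range_succ, Finset.sum_range_succ, ih, zpow_add₀ hq0]

lemma sum2 (n : ℕ) : 2 * ((∑ j ∈ range n, j : ℕ) : ℤ) = (n : ℤ) * n - n := by
  induction n with
  | zero => simp
  | succ n ih =>
    rw [Finset.sum_range_succ]
    push_cast
    push_cast at ih
    ring_nf
    ring_nf at ih
    linarith

/-- The finite Jacobi triple product identity. -/
lemma finite_jtp {q z : ℂ} (hq : ‖q‖ < 1) (hq0 : q ≠ 0) (hz : z ≠ 0) (N : ℕ) :
    (∏ k ∈ range N, (1 + z * q ^ (k + 1))) * (∏ k ∈ range N, (1 + z⁻¹ * q ^ k))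
      = ∑ m ∈ range (2 * N + 1),
          Gq q (2 * N) m * z ^ ((m : ℤ) - N) * q ^ (((m : ℤ) - N) * (((m : ℤ) - N) + 1) / 2) := by
  set S : ℤ := ∑ k ∈ range N, (k : ℤ) with hSdef
  have key := gauss hq (z * q ^ ((1 : ℤ) - N)) (2 * N)
  have hL1 : ∏ k ∈ range (2 * N), (1 + z * q ^ ((1 : ℤ) - N) * q ^ k)
      = ∏ k ∈ range (2 * N), (1 + z * q ^ ((k : ℤ) + 1 - N)) := by
    refine Finset.prod_congr rfl fun k _ => ?_
    rw [show (k : ℤ) + 1 - N = (1 - (N : ℤ)) + k by ring, zpow_add₀ hq0, zpow_natCast]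
    ring
  have hL2 : ∏ k ∈ range N, (1 + z * q ^ (((N + k : ℕ) : ℤ) + 1 - N))
      = ∏ k ∈ range N, (1 + z * q ^ (k + 1)) := by
    refine Finset.prod_congr rfl fun k _ => ?_
    rw [show ((N + k : ℕ) : ℤ) + 1 - N = ((k + 1 : ℕ) : ℤ) by push_cast; ring, zpow_natCast]
  have hL3 : ∏ k ∈ range N, (1 + z * q ^ ((k : ℤ) + 1 - N))
      = (z ^ N * q ^ (-S)) * ∏ k ∈ range N, (1 + z⁻¹ * q ^ k) := by
    rw [← Finset.prod_range_reflect]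
    have hre : ∀ j ∈ range N, (1 + z * q ^ (((N - 1 - j : ℕ) : ℤ) + 1 - N))
        = (z * q ^ (-(j : ℤ))) * (1 + z⁻¹ * q ^ j) := by
      intro j hj
      have hjN : j < N := Finset.mem_range.mp hj
      have hcast : ((N - 1 - j : ℕ) : ℤ) + 1 - N = -(j : ℤ) := by omega
      rw [hcast]
      have h1 : q ^ (-(j : ℤ)) * q ^ (j : ℕ) = 1 := by
        rw [← zpow_natCast q j, ← zpow_add₀ hq0]; simp
      have h2 : z * z⁻¹ = 1 := mul_inv_cancel₀ hz
      linear_combination (-z * z⁻¹) * h1 - h2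
    rw [Finset.prod_congr rfl hre, Finset.prod_mul_distrib, Finset.prod_mul_distrib,
      Finset.prod_const, Finset.card_range, zpow_prod q hq0,
      show ∑ k ∈ range N, -(k : ℤ) = -S by rw [hSdef, ← Finset.sum_neg_distrib]]
  rw [hL1, two_mul, Finset.prod_range_add, hL3, hL2,
    show N + N = 2 * N from (two_mul N).symm] at key
  have hC : z ^ N * q ^ (-S) ≠ 0 := mul_ne_zero (pow_ne_zero _ hz) (zpow_ne_zero _ hq0)
  refine mul_left_cancel₀ hC ?_
  have hterm : ∀ m ∈ range (2 * N + 1),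
      Gq q (2 * N) m * q ^ (∑ j ∈ range m, j) * (z * q ^ ((1 : ℤ) - N)) ^ m
        = z ^ N * q ^ (-S) *
            (Gq q (2 * N) m * z ^ ((m : ℤ) - N)
              * q ^ (((m : ℤ) - N) * (((m : ℤ) - N) + 1) / 2)) := by
    intro m hm
    have hT : 2 * ((∑ j ∈ range m, j : ℕ) : ℤ) = (m : ℤ) * m - m := sum2 m
    have hS2 : 2 * S = (N : ℤ) * N - N := by
      rw [hSdef, ← Nat.cast_sum]; exact sum2 N
    have hE : 2 * (((m : ℤ) - N) * (((m : ℤ) - N) + 1) / 2)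
        = ((m : ℤ) - N) * (((m : ℤ) - N) + 1) :=
      Int.two_mul_ediv_two_of_even (Int.even_mul_succ_self _)
    have hzz : z ^ (m : ℕ) = z ^ (N : ℕ) * z ^ ((m : ℤ) - N) := by
      rw [← zpow_natCast z m, ← zpow_natCast z N, ← zpow_add₀ hz]
      congr 1; ring
    have hqq : q ^ ((∑ j ∈ range m, j : ℕ)) * (q ^ ((1 : ℤ) - N)) ^ m
        = q ^ (-S) * q ^ (((m : ℤ) - N) * (((m : ℤ) - N) + 1) / 2) := by
      rw [← zpow_natCast (q ^ ((1 : ℤ) - N)) m, ← zpow_mul, ← zpow_natCast q,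
        ← zpow_add₀ hq0, ← zpow_add₀ hq0]
      congr 1
      have h2 : 2 * (((∑ j ∈ range m, j : ℕ) : ℤ) + ((1 : ℤ) - N) * m)
          = 2 * (-S + ((m : ℤ) - N) * (((m : ℤ) - N) + 1) / 2) := by
        linear_combination hT + hS2 - hE
      linarith
    calc Gq q (2 * N) m * q ^ (∑ j ∈ range m, j) * (z * q ^ ((1 : ℤ) - N)) ^ m
        = Gq q (2 * N) m * z ^ m
            * (q ^ (∑ j ∈ range m, j) * (q ^ ((1 : ℤ) - N)) ^ m) := by
          rw [mul_pow]; ring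
      _ = Gq q (2 * N) m * (z ^ N * z ^ ((m : ℤ) - N))
            * (q ^ (-S) * q ^ (((m : ℤ) - N) * (((m : ℤ) - N) + 1) / 2)) := by
          rw [hzz, hqq]
      _ = z ^ N * q ^ (-S) *
            (Gq q (2 * N) m * z ^ ((m : ℤ) - N)
              * q ^ (((m : ℤ) - N) * (((m : ℤ) - N) + 1) / 2)) := by ring
  calc z ^ N * q ^ (-S) *
        ((∏ k ∈ range N, (1 + z * q ^ (k + 1))) * ∏ k ∈ range N, (1 + z⁻¹ * q ^ k))
      = (z ^ N * q ^ (-S) * ∏ k ∈ range N, (1 + z⁻¹ * q ^ k))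
          * ∏ k ∈ range N, (1 + z * q ^ (k + 1)) := by ring
    _ = ∑ m ∈ range (2 * N + 1),
          Gq q (2 * N) m * q ^ (∑ j ∈ range m, j) * (z * q ^ ((1 : ℤ) - N)) ^ m := key
    _ = ∑ m ∈ range (2 * N + 1), z ^ N * q ^ (-S) *
          (Gq q (2 * N) m * z ^ ((m : ℤ) - N)
            * q ^ (((m : ℤ) - N) * (((m : ℤ) - N) + 1) / 2)) := Finset.sum_congr rfl hterm
    _ = z ^ N * q ^ (-S) * ∑ m ∈ range (2 * N + 1),
          Gq q (2 * N) m * z ^ ((m : ℤ) - N)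
            * q ^ (((m : ℤ) - N) * (((m : ℤ) - N) + 1) / 2) := by rw [Finset.mul_sum]

lemma multipliable_one_add {c : ℕ → ℂ} (hc : Summable fun k => ‖c k‖) :
    Multipliable (fun k => 1 + c k) := by
  by_cases h : ∀ k, 1 + c k ≠ 0
  · have h0 : Tendsto (fun k => ‖c k‖) atTop (𝓝 0) := hc.tendsto_atTop_zero
    have hsmall : ∀ᶠ k in atTop, ‖c k‖ ≤ 1 / 2 :=
      h0.eventually_le_const (by norm_num : (0 : ℝ) < 1 / 2)
    have hlog : Summable fun k => Complex.log (1 + c k) := by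
      refine Summable.of_norm_bounded_eventually (g := fun k => 3 / 2 * ‖c k‖)
        (hc.mul_left (3 / 2)) ?_
      rw [Nat.cofinite_eq_atTop]
      filter_upwards [hsmall] with k hk
      exact Complex.norm_log_one_add_half_le_self hk
    exact Complex.multipliable_of_summable_log hlog
  · push_neg at h
    obtain ⟨k0, hk0⟩ := h
    refine ⟨0, ?_⟩
    have hev : ∀ᶠ s : Finset ℕ in atTop, (0 : ℂ) = ∏ i ∈ s, (1 + c i) := by
      filter_upwards [Filter.eventually_ge_atTop ({k0} : Finset ℕ)] with s hs
      exact (Finset.prod_eq_zero (hs (Finset.mem_singleton_self k0)) hk0).symm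
    exact Tendsto.congr' hev tendsto_const_nhds

lemma tendsto_prod_one_add {c : ℕ → ℂ} (hc : Summable fun k => ‖c k‖) :
    Tendsto (fun N => ∏ k ∈ range N, (1 + c k)) atTop (𝓝 (∏' k, (1 + c k))) :=
  HasProd.tendsto_prod_nat (multipliable_one_add hc).hasProd

lemma summable_norm_geom {q : ℂ} (hq : ‖q‖ < 1) (w : ℂ) (j : ℕ) :
    Summable fun k => ‖w * q ^ (k + j)‖ := by
  have : Summable fun k : ℕ => ‖q‖ ^ k := summable_geometric_of_lt_one (norm_nonneg q) hq
  refine Summable.of_nonneg_of_le (fun k => norm_nonneg _) (fun k => ?_)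
    ((this.mul_left (‖w‖ * ‖q‖ ^ j)))
  rw [norm_mul, norm_pow]
  calc ‖w‖ * ‖q‖ ^ (k + j) = ‖w‖ * ‖q‖ ^ j * ‖q‖ ^ k := by rw [pow_add]; ring
    _ ≤ ‖w‖ * ‖q‖ ^ j * ‖q‖ ^ k := le_rfl

lemma Pq_norm_le {q : ℂ} (hq : ‖q‖ < 1) (M : ℕ) :
    ‖Pq q M‖ ≤ Real.exp (‖q‖ / (1 - ‖q‖)) := by
  have hr0 : 0 ≤ ‖q‖ := norm_nonneg q
  have h1r : 0 < 1 - ‖q‖ := by linarith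
  have hgeom : ∑ k ∈ range M, ‖q‖ ^ (k + 1) ≤ ‖q‖ / (1 - ‖q‖) := by
    have h1 : ∑ k ∈ range M, ‖q‖ ^ (k + 1) = ‖q‖ * ∑ k ∈ range M, ‖q‖ ^ k := by
      rw [Finset.mul_sum]
      exact Finset.sum_congr rfl fun k _ => by ring
    have h2 : ∑ k ∈ range M, ‖q‖ ^ k ≤ (1 - ‖q‖)⁻¹ := by
      rw [← tsum_geometric_of_lt_one hr0 hq]
      exact Summable.sum_le_tsum (range M) (fun k _ => pow_nonneg hr0 k)
        (summable_geometric_of_lt_one hr0 hq)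
    rw [h1, div_eq_mul_inv]
    exact mul_le_mul_of_nonneg_left h2 hr0
  rw [Pq, norm_prod]
  calc ∏ k ∈ range M, ‖1 - q ^ (k + 1)‖
      ≤ ∏ k ∈ range M, Real.exp (‖q‖ ^ (k + 1)) := by
        refine Finset.prod_le_prod (fun k _ => norm_nonneg _) (fun k _ => ?_)
        calc ‖1 - q ^ (k + 1)‖ ≤ ‖(1 : ℂ)‖ + ‖q ^ (k + 1)‖ := norm_sub_le _ _
          _ = ‖q‖ ^ (k + 1) + 1 := by rw [norm_one, norm_pow]; ring
          _ ≤ Real.exp (‖q‖ ^ (k + 1)) := Real.add_one_le_exp _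
    _ = Real.exp (∑ k ∈ range M, ‖q‖ ^ (k + 1)) := by rw [Real.exp_sum]
    _ ≤ Real.exp (‖q‖ / (1 - ‖q‖)) := Real.exp_le_exp.mpr hgeom

lemma Pq_norm_ge {q : ℂ} (hq : ‖q‖ < 1) (M : ℕ) :
    Real.exp (-(‖q‖ / (1 - ‖q‖) ^ 2)) ≤ ‖Pq q M‖ := by
  have hr0 : 0 ≤ ‖q‖ := norm_nonneg q
  have h1r : 0 < 1 - ‖q‖ := by linarith
  have key : ∀ k : ℕ, Real.exp (-(‖q‖ ^ (k + 1) / (1 - ‖q‖))) ≤ ‖1 - q ^ (k + 1)‖ := by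
    intro k
    set t := ‖q‖ ^ (k + 1) with ht
    have ht0 : 0 ≤ t := pow_nonneg hr0 _
    have htr : t ≤ ‖q‖ := pow_le_of_le_one hr0 (le_of_lt hq) (Nat.succ_ne_zero k)
    have h1t : 0 < 1 - t := by linarith
    have hlog : -(t / (1 - ‖q‖)) ≤ Real.log (1 - t) := by
      have h := Real.one_sub_inv_le_log_of_pos h1t
      have hq1 : 1 - (1 - t)⁻¹ = -(t / (1 - t)) := by field_simp; ring
      rw [hq1] at h
      refine le_trans (neg_le_neg ?_) h
      exact div_le_div_of_nonneg_left ht0 h1r (by linarith)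
    calc Real.exp (-(t / (1 - ‖q‖))) ≤ Real.exp (Real.log (1 - t)) := Real.exp_le_exp.mpr hlog
      _ = 1 - t := Real.exp_log h1t
      _ ≤ ‖1 - q ^ (k + 1)‖ := by
          have h := norm_sub_norm_le (1 : ℂ) (q ^ (k + 1))
          rw [norm_one, norm_pow] at h
          exact h
  rw [Pq, norm_prod]
  calc Real.exp (-(‖q‖ / (1 - ‖q‖) ^ 2))
      ≤ Real.exp (∑ k ∈ range M, -(‖q‖ ^ (k + 1) / (1 - ‖q‖))) := by
        refine Real.exp_le_exp.mpr ?_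
        have hgeom : ∑ k ∈ range M, ‖q‖ ^ (k + 1) ≤ ‖q‖ / (1 - ‖q‖) := by
          have h1 : ∑ k ∈ range M, ‖q‖ ^ (k + 1) = ‖q‖ * ∑ k ∈ range M, ‖q‖ ^ k := by
            rw [Finset.mul_sum]
            exact Finset.sum_congr rfl fun k _ => by ring
          have h2 : ∑ k ∈ range M, ‖q‖ ^ k ≤ (1 - ‖q‖)⁻¹ := by
            rw [← tsum_geometric_of_lt_one hr0 hq]
            exact Summable.sum_le_tsum (range M) (fun k _ => pow_nonneg hr0 k)
              (summable_geometric_of_lt_one hr0 hq)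
          rw [h1, div_eq_mul_inv]
          exact mul_le_mul_of_nonneg_left h2 hr0
        have hsumeq : ∑ k ∈ range M, -(‖q‖ ^ (k + 1) / (1 - ‖q‖))
            = -((∑ k ∈ range M, ‖q‖ ^ (k + 1)) / (1 - ‖q‖)) := by
          rw [Finset.sum_neg_distrib, ← Finset.sum_div]
        rw [hsumeq, neg_le_neg_iff,
          show ‖q‖ / (1 - ‖q‖) ^ 2 = ‖q‖ / (1 - ‖q‖) / (1 - ‖q‖) from by rw [div_div, ← sq]]
        gcongr
    _ = ∏ k ∈ range M, Real.exp (-(‖q‖ ^ (k + 1) / (1 - ‖q‖))) := by rw [Real.exp_sum]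
    _ ≤ ∏ k ∈ range M, ‖1 - q ^ (k + 1)‖ :=
        Finset.prod_le_prod (fun k _ => (Real.exp_pos _).le) (fun k _ => key k)

lemma summable_ratio_aux {w : ℝ} (hw : 0 < w) {r : ℝ} (h0 : 0 < r) (h1 : r < 1)
    (g d : ℕ → ℕ) (hg : ∀ k, g (k + 1) = g k + d k) (hd : Tendsto d atTop atTop) :
    Summable fun k => w ^ k * r ^ g k := by
  refine summable_of_ratio_test_tendsto_lt_one one_pos
    (Filter.Eventually.of_forall fun k => by positivity) ?_
  have hratio : ∀ k : ℕ, ‖w ^ (k + 1) * r ^ g (k + 1)‖ / ‖w ^ k * r ^ g k‖ = w * r ^ d k := by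
    intro k
    rw [Real.norm_of_nonneg (by positivity), Real.norm_of_nonneg (by positivity), hg k,
      pow_add, pow_succ]
    rw [div_eq_iff (by positivity)]
    ring
  rw [show (0 : ℝ) = w * 0 from (mul_zero w).symm]
  refine Tendsto.congr (fun k => (hratio k).symm) ?_
  exact ((tendsto_pow_atTop_nhds_zero_of_lt_one h0.le h1).comp hd).const_mul w

lemma cast_half_nat (k : ℕ) : (k : ℤ) * ((k : ℤ) + 1) / 2 = ((k * (k + 1) / 2 : ℕ) : ℤ) := by
  rw [Int.natCast_ediv]
  push_cast
  ring_nf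

lemma cast_half_neg (k : ℕ) : -(k : ℤ) * (-(k : ℤ) + 1) / 2 = ((k * (k - 1) / 2 : ℕ) : ℤ) := by
  rw [Int.natCast_ediv]
  cases k with
  | zero => simp
  | succ n =>
    push_cast [Nat.succ_sub_one]
    ring_nf

set_option maxHeartbeats 1000000 in
lemma summable_bound {q z : ℂ} (hq : ‖q‖ < 1) (hq0 : q ≠ 0) (hz : z ≠ 0) :
    Summable fun n : ℤ => ‖z ^ n * q ^ (n * (n + 1) / 2)‖ := by
  have hr0 : 0 < ‖q‖ := norm_pos_iff.mpr hq0
  have hz0 : 0 < ‖z‖ := norm_pos_iff.mpr hz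
  apply Summable.of_nat_of_neg
  · have hsum := summable_ratio_aux hz0 hr0 hq (fun k => k * (k + 1) / 2) (fun k => k + 1)
      (fun k => by
        show (k + 1) * (k + 1 + 1) / 2 = k * (k + 1) / 2 + (k + 1)
        have h : (k + 1) * (k + 1 + 1) = k * (k + 1) + 2 * (k + 1) := by ring
        omega)
      (tendsto_add_atTop_nat 1)
    refine hsum.congr fun k => ?_
    rw [norm_mul, norm_zpow, norm_zpow, cast_half_nat k, zpow_natCast, zpow_natCast]
  · have hsum := summable_ratio_aux (inv_pos.mpr hz0) hr0 hq (fun k => k * (k - 1) / 2)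
      (fun k => k)
      (fun k => by
        show (k + 1) * (k + 1 - 1) / 2 = k * (k - 1) / 2 + k
        have h : (k + 1) * (k + 1 - 1) = k * (k - 1) + 2 * k := by
          cases k
          · rfl
          · simp only [Nat.add_sub_cancel, Nat.succ_sub_one]
            ring
        omega)
      tendsto_id
    refine hsum.congr fun k => ?_
    rw [norm_mul, norm_zpow, norm_zpow, cast_half_neg k, zpow_natCast, zpow_neg, zpow_natCast,
      ← inv_pow]

set_option maxHeartbeats 1000000 in
lemma jtp_of_ne_zero {q z : ℂ} (hq : ‖q‖ < 1) (hq0 : q ≠ 0) (hz : z ≠ 0) :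
    (∏' k : ℕ, (1 + z * q ^ (k + 1))) * (∏' k : ℕ, (1 + z⁻¹ * q ^ k)) =
      (∏' k : ℕ, (1 - q ^ (k + 1)))⁻¹ * ∑' n : ℤ, z ^ n * q ^ (n * (n + 1) / 2) := by
  have hsumA : Summable fun k : ℕ => ‖z * q ^ (k + 1)‖ := summable_norm_geom hq z 1
  have hsumB : Summable fun k : ℕ => ‖z⁻¹ * q ^ k‖ := by
    simpa using summable_norm_geom hq z⁻¹ 0
  have hA : Tendsto (fun N => ∏ k ∈ range N, (1 + z * q ^ (k + 1))) atTop
      (𝓝 (∏' k : ℕ, (1 + z * q ^ (k + 1)))) := tendsto_prod_one_add hsumA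
  have hB : Tendsto (fun N => ∏ k ∈ range N, (1 + z⁻¹ * q ^ k)) atTop
      (𝓝 (∏' k : ℕ, (1 + z⁻¹ * q ^ k))) := tendsto_prod_one_add hsumB
  have hsumP : Summable fun k : ℕ => ‖-(q ^ (k + 1))‖ := by
    simpa using summable_norm_geom hq (-1 : ℂ) 1
  have hPeq : (∏' k : ℕ, (1 + -(q ^ (k + 1)))) = ∏' k : ℕ, (1 - q ^ (k + 1)) :=
    tprod_congr fun k => by ring
  set Pinf := ∏' k : ℕ, (1 - q ^ (k + 1)) with hPinf
  have hP : Tendsto (fun M => Pq q M) atTop (𝓝 Pinf) := by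
    rw [← hPeq]
    refine (tendsto_prod_one_add hsumP).congr fun M => ?_
    exact Finset.prod_congr rfl fun k _ => by ring
  have hPne : Pinf ≠ 0 := by
    have hge : Real.exp (-(‖q‖ / (1 - ‖q‖) ^ 2)) ≤ ‖Pinf‖ :=
      ge_of_tendsto hP.norm (Filter.Eventually.of_forall fun M => Pq_norm_ge hq M)
    intro h
    rw [h, norm_zero] at hge
    exact absurd hge (not_le.mpr (Real.exp_pos _))
  set c : ℤ → ℂ := fun n => z ^ n * q ^ (n * (n + 1) / 2) with hc
  set f : ℕ → ℤ → ℂ := fun N n =>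
    if n.natAbs ≤ N then
      Pq q (2 * N) / (Pq q ((N : ℤ) + n).toNat * Pq q ((N : ℤ) - n).toNat) * c n
    else 0 with hf
  have hfin : ∀ N : ℕ, (∑' n : ℤ, f N n)
      = ∑ m ∈ range (2 * N + 1), Gq q (2 * N) m * z ^ ((m : ℤ) - N)
          * q ^ (((m : ℤ) - N) * (((m : ℤ) - N) + 1) / 2) := by
    intro N
    rw [tsum_eq_sum (s := Finset.Icc (-(N : ℤ)) (N : ℤ))
      (f := f N)
      (fun n hn => by
        have hn' : ¬ (-(N : ℤ) ≤ n ∧ n ≤ N) := by simpa [Finset.mem_Icc] using hn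
        simp only [hf]
        rw [if_neg (by omega)])]
    refine Finset.sum_nbij' (i := fun n => (n + (N : ℤ)).toNat) (j := fun m => (m : ℤ) - N)
      (fun n hn => ?_) (fun m hm => ?_) (fun n hn => ?_) (fun m hm => ?_) (fun n hn => ?_)
    · have hn' : -(N : ℤ) ≤ n ∧ n ≤ N := by simpa [Finset.mem_Icc] using hn
      simp only [Finset.mem_range]
      omega
    · have hm' : m < 2 * N + 1 := by simpa [Finset.mem_range] using hm
      simp only [Finset.mem_Icc]
      omega
    · have hn' : -(N : ℤ) ≤ n ∧ n ≤ N := by simpa [Finset.mem_Icc] using hn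
      show (((n + (N : ℤ)).toNat : ℤ) - N) = n
      omega
    · have hm' : m < 2 * N + 1 := by simpa [Finset.mem_range] using hm
      show (((m : ℤ) - N) + N).toNat = m
      omega
    · have hn' : -(N : ℤ) ≤ n ∧ n ≤ N := by simpa [Finset.mem_Icc] using hn
      simp only [hf, hc]
      rw [if_pos (by omega : n.natAbs ≤ N), Gq,
        if_pos (by omega : (n + (N : ℤ)).toNat ≤ 2 * N),
        show ((n + (N : ℤ)).toNat : ℤ) - (N : ℤ) = n from by omega,
        show ((N : ℤ) + n).toNat = (n + (N : ℤ)).toNat from by omega,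
        show 2 * N - (n + (N : ℤ)).toNat = ((N : ℤ) - n).toNat from by omega]
      ring
  have hpt : ∀ n : ℤ, Tendsto (fun N => f N n) atTop (𝓝 (Pinf⁻¹ * c n)) := by
    intro n
    have h2N : Tendsto (fun N : ℕ => 2 * N) atTop atTop :=
      tendsto_atTop_atTop_of_monotone (fun a b h => by omega) (fun b => ⟨b, by omega⟩)
    have hplus : Tendsto (fun N : ℕ => ((N : ℤ) + n).toNat) atTop atTop :=
      tendsto_atTop_atTop_of_monotone (fun a b h => by omega)
        (fun b => ⟨b + n.natAbs, by omega⟩)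
    have hminus : Tendsto (fun N : ℕ => ((N : ℤ) - n).toNat) atTop atTop :=
      tendsto_atTop_atTop_of_monotone (fun a b h => by omega)
        (fun b => ⟨b + n.natAbs, by omega⟩)
    have hlim : Tendsto (fun N : ℕ =>
        Pq q (2 * N) / (Pq q ((N : ℤ) + n).toNat * Pq q ((N : ℤ) - n).toNat) * c n)
        atTop (𝓝 (Pinf / (Pinf * Pinf) * c n)) :=
      Tendsto.mul_const _ ((hP.comp h2N).div ((hP.comp hplus).mul (hP.comp hminus))
        (mul_ne_zero hPne hPne))
    have heq : Pinf / (Pinf * Pinf) = Pinf⁻¹ := by field_simp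
    rw [← heq]
    refine hlim.congr' ?_
    filter_upwards [Filter.eventually_ge_atTop n.natAbs] with N hN
    simp only [hf]
    rw [if_pos hN]
  have hbound : ∀ N : ℕ, ∀ n : ℤ, ‖f N n‖
      ≤ Real.exp (‖q‖ / (1 - ‖q‖))
          / (Real.exp (-(‖q‖ / (1 - ‖q‖) ^ 2)) * Real.exp (-(‖q‖ / (1 - ‖q‖) ^ 2))) * ‖c n‖ := by
    intro N n
    simp only [hf]
    split_ifs with h
    · rw [norm_mul, norm_div, norm_mul]
      refine mul_le_mul_of_nonneg_right ?_ (norm_nonneg _)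
      refine div_le_div₀ (by positivity) (Pq_norm_le hq _) (by positivity) ?_
      exact mul_le_mul (Pq_norm_ge hq _) (Pq_norm_ge hq _) (Real.exp_pos _).le (norm_nonneg _)
    · rw [norm_zero]
      positivity
  have hT : Tendsto (fun N => ∑' n : ℤ, f N n) atTop (𝓝 (∑' n : ℤ, Pinf⁻¹ * c n)) :=
    tendsto_tsum_of_dominated_convergence
      ((summable_bound hq hq0 hz).mul_left _) hpt (Filter.Eventually.of_forall hbound)
  have hLHS : Tendsto (fun N =>
      (∏ k ∈ range N, (1 + z * q ^ (k + 1))) * ∏ k ∈ range N, (1 + z⁻¹ * q ^ k)) atTop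
      (𝓝 ((∏' k : ℕ, (1 + z * q ^ (k + 1))) * ∏' k : ℕ, (1 + z⁻¹ * q ^ k))) := hA.mul hB
  have hRHS : Tendsto (fun N =>
      (∏ k ∈ range N, (1 + z * q ^ (k + 1))) * ∏ k ∈ range N, (1 + z⁻¹ * q ^ k)) atTop
      (𝓝 (∑' n : ℤ, Pinf⁻¹ * c n)) := by
    refine hT.congr fun N => ?_
    exact (hfin N).trans (finite_jtp hq hq0 hz N).symm
  have hmain := tendsto_nhds_unique hLHS hRHS
  rw [hmain, tsum_mul_left]

lemma jtp_zero {z : ℂ} (hz : z ≠ 0) :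
    (∏' k : ℕ, (1 + z * (0 : ℂ) ^ (k + 1))) * (∏' k : ℕ, (1 + z⁻¹ * (0 : ℂ) ^ k)) =
      (∏' k : ℕ, (1 - (0 : ℂ) ^ (k + 1)))⁻¹ *
        ∑' n : ℤ, z ^ n * (0 : ℂ) ^ (n * (n + 1) / 2) := by
  have hL1 : (∏' k : ℕ, (1 + z * (0 : ℂ) ^ (k + 1))) = 1 := by
    rw [tprod_congr (fun k => by simp : ∀ k : ℕ, (1 + z * (0 : ℂ) ^ (k + 1)) = 1)]
    exact tprod_one
  have hL2 : (∏' k : ℕ, (1 + z⁻¹ * (0 : ℂ) ^ k)) = 1 + z⁻¹ := by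
    rw [tprod_eq_prod (s := ({0} : Finset ℕ)) (fun b hb => by
      have hb' : b ≠ 0 := by simpa using hb
      simp [zero_pow hb'])]
    simp
  have hR1 : (∏' k : ℕ, (1 - (0 : ℂ) ^ (k + 1))) = 1 := by
    rw [tprod_congr (fun k => by simp : ∀ k : ℕ, (1 - (0 : ℂ) ^ (k + 1)) = 1)]
    exact tprod_one
  have hR2 : (∑' n : ℤ, z ^ n * (0 : ℂ) ^ (n * (n + 1) / 2)) = 1 + z⁻¹ := by
    rw [tsum_eq_sum (s := ({0, -1} : Finset ℤ)) (fun n hn => by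
      have h0 : n ≠ 0 ∧ n ≠ -1 := by simpa using hn
      have h2 : 2 * (n * (n + 1) / 2) = n * (n + 1) :=
        Int.two_mul_ediv_two_of_even (Int.even_mul_succ_self n)
      have hne : n * (n + 1) ≠ 0 := mul_ne_zero h0.1 (by omega)
      rw [zero_zpow _ (fun h => hne (by omega)), mul_zero])]
    rw [Finset.sum_pair (by decide : (0 : ℤ) ≠ -1)]
    norm_num
  rw [hL1, hL2, hR1, hR2, one_mul, inv_one, one_mul]

end JTPaux

/-- Jacobi's triple product identity:
`(-zq; q)_∞ (-1/z; q)_∞ = (q;q)_∞⁻¹ Σ_{n∈ℤ} z^n q^{n(n+1)/2}` for `‖q‖ < 1`, `z ≠ 0`. -/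
theorem stmt17 (q z : ℂ) (hq : ‖q‖ < 1) (hz : z ≠ 0) :
    (∏' k : ℕ, (1 + z * q ^ (k + 1))) * (∏' k : ℕ, (1 + z⁻¹ * q ^ k)) =
      (∏' k : ℕ, (1 - q ^ (k + 1)))⁻¹ * ∑' n : ℤ, z ^ n * q ^ (n * (n + 1) / 2) := by
  by_cases hq0 : q = 0
  · subst hq0
    exact JTPaux.jtp_zero hz
  · exact JTPaux.jtp_of_ne_zero hq hq0 hz

end
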